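/- arXiv:1206.2624 — 6 statements merged into one kernel-verified Lean document; each statement's English description precedes it below -/
import Mathlib

section
/- For z ∈ ℂ \ (ℝ₊ ∪ {0}), the function Ei is complex-differentiable with derivative Ei'(z) = e^z / z. -/
open scoped Real

/-- The Euler–Mascheroni constant γ = -∫₀^∞ e^{-x} ln x dx. -/
noncomputable def gammaE : ℝ := -∫ x in Set.Ioi (0 : ℝ), Real.exp (-x) * Real.log x

/-- Ei(z) = γ + ln(-z) + ∑_{n=1}^∞ z^n/(n·n!), principal branch of log. -/
noncomputable def Ei (z : ℂ) : ℂ :=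
  (gammaE : ℂ) + Complex.log (-z) +
    ∑' n : ℕ, z ^ (n + 1) / (((n : ℂ) + 1) * (Nat.factorial (n + 1) : ℂ))

/-- z is off the branch cut ℝ₊ ∪ {0}. -/
def offCut (z : ℂ) : Prop := ¬ (z.im = 0 ∧ 0 ≤ z.re)

lemma summable_u (R : ℝ) (hR : 0 ≤ R) : Summable fun n : ℕ => R ^ n / ((n+1).factorial : ℝ) := by
  apply Summable.of_nonneg_of_le (fun n => ?_) (fun n => ?_) (Real.summable_pow_div_factorial R)
  · positivity
  · apply div_le_div_of_nonneg_left (by positivity) (by positivity)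
    exact_mod_cast Nat.factorial_le (Nat.le_succ n)

lemma tsum_exp (z : ℂ) (hz : z ≠ 0) :
    ∑' n : ℕ, z ^ n / ((n+1).factorial : ℂ) = (Complex.exp z - 1) / z := by
  have hsum : Summable fun n : ℕ => z ^ n / (n.factorial : ℂ) :=
    (Real.summable_pow_div_factorial ‖z‖).of_norm_bounded (fun n => le_of_eq (by
      simp [norm_div, norm_pow, Complex.norm_natCast]))
  have he : Complex.exp z = ∑' n : ℕ, z ^ n / (n.factorial : ℂ) := by
    rw [Complex.exp_eq_exp_ℂ, NormedSpace.exp_eq_tsum_div]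
  have h0 : ∑' n : ℕ, z ^ n / (n.factorial : ℂ)
      = 1 + ∑' n : ℕ, z ^ (n+1) / ((n+1).factorial : ℂ) := by
    rw [Summable.tsum_eq_zero_add hsum]; simp
  have h1 : ∑' n : ℕ, z ^ (n+1) / ((n+1).factorial : ℂ)
      = z * ∑' n : ℕ, z ^ n / ((n+1).factorial : ℂ) := by
    rw [← tsum_mul_left]; congr 1; ext n; ring
  rw [h1] at h0
  rw [he, h0]
  field_simp
  ring

lemma series_deriv (z : ℂ) :
    HasDerivAt (fun w : ℂ => ∑' n : ℕ, w ^ (n + 1) / (((n : ℂ) + 1) * (Nat.factorial (n + 1) : ℂ)))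
      (∑' n : ℕ, z ^ n / ((n+1).factorial : ℂ)) z := by
  set R := ‖z‖ + 1 with hRdef
  have hzR : z ∈ Metric.ball (0:ℂ) R := by simp [hRdef]
  refine hasDerivAt_tsum_of_isPreconnected (u := fun n : ℕ => R ^ n / ((n+1).factorial : ℝ))
    (g' := fun n y => y ^ n / ((n+1).factorial : ℂ))
    (summable_u R (by positivity)) Metric.isOpen_ball (convex_ball (0:ℂ) R).isPreconnected
    (fun n y _ => ?_) (fun n y hy => ?_) hzR ?_ hzR
  · have h := (hasDerivAt_pow (n+1) y).div_const (((n : ℂ) + 1) * (Nat.factorial (n + 1) : ℂ))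
    convert h using 1
    have hne : ((n : ℂ) + 1) ≠ 0 := Nat.cast_add_one_ne_zero n
    have hf : ((n+1).factorial : ℂ) ≠ 0 := by exact_mod_cast Nat.factorial_ne_zero (n+1)
    rfl
    rw [Nat.add_sub_cancel, Nat.cast_add_one, mul_div_mul_left _ _ (Nat.cast_add_one_ne_zero (R := ℂ) n)]
  · have : ‖y ^ n / ((n+1).factorial : ℂ)‖ = ‖y‖ ^ n / ((n+1).factorial : ℝ) := by
      simp [norm_div, norm_pow, Complex.norm_natCast]
    rw [this]
    apply div_le_div_of_nonneg_right ?_ (by positivity)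
    · exact pow_le_pow_left₀ (norm_nonneg y) (le_of_lt (by simpa using hy)) n
  · apply Summable.of_norm
    apply Summable.of_nonneg_of_le (fun n => norm_nonneg _) (fun n => ?_)
      ((summable_u ‖z‖ (norm_nonneg z)).mul_right ‖z‖)
    have hC : ‖(((n : ℂ) + 1) * (Nat.factorial (n + 1) : ℂ))‖ = ((n:ℝ)+1) * ((n+1).factorial : ℝ) := by
      rw [show ((n:ℂ)+1) = ((n+1:ℕ):ℂ) by push_cast; ring, norm_mul,
        Complex.norm_natCast, Complex.norm_natCast]
      push_cast; ring
    rw [norm_div, norm_pow, hC]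
    calc ‖z‖ ^ (n+1) / (((n:ℝ)+1) * ((n+1).factorial : ℝ))
        ≤ ‖z‖ ^ (n+1) / (1 * ((n+1).factorial : ℝ)) := by
          apply div_le_div_of_nonneg_left (by positivity) (by positivity)
          apply mul_le_mul_of_nonneg_right _ (by positivity)
          linarith [Nat.cast_nonneg (α := ℝ) n]
      _ = ‖z‖ ^ (n+1) / ((n+1).factorial : ℝ) := by ring
      _ = ‖z‖ ^ n / ((n+1).factorial : ℝ) * ‖z‖ := by rw [div_mul_eq_mul_div]; ring

/-- For z off the cut, Ei is complex-differentiable with Ei'(z) = e^z/z. -/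
theorem stmt4 (z : ℂ) (hz : offCut z) :
    HasDerivAt Ei (Complex.exp z / z) z := by
  have hz0 : z ≠ 0 := by
    intro h
    exact hz (by simp [h])
  have hslit : -z ∈ Complex.slitPlane := by
    rw [Complex.mem_slitPlane_iff]
    simp only [Complex.neg_re, Complex.neg_im, neg_ne_zero]
    by_contra h
    push_neg at h
    exact hz ⟨h.2, by linarith [h.1]⟩
  have hlog : HasDerivAt (fun w : ℂ => Complex.log (-w)) z⁻¹ z := by
    have h := (Complex.hasDerivAt_log hslit).comp z (hasDerivAt_neg z)
    have he : (-z)⁻¹ * -1 = z⁻¹ := by field_simp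
    rw [← he]
    exact h
  have hser := series_deriv z
  rw [tsum_exp z hz0] at hser
  have htot := ((hasDerivAt_const z (gammaE : ℂ)).add hlog).add hser
  have : HasDerivAt Ei (0 + z⁻¹ + (Complex.exp z - 1) / z) z := htot
  convert this using 1
  field_simp
  ring
end

section
/- The regularized Green's function satisfies the symmetry conj(g^r(z, λ)) · X(z, λ) = g^r(z, λ) for all z ≠ 0 and λ ≠ 0; in particular X(z,λ) · conj(g^r) = g^r where X(z,λ) = e^{-iλz - iλ̄z̄}. -/
open scoped Real

/-- The continuous extension of Ei(z) + Ei(z̄):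
2γ + 2 ln|z| + ∑_{n=1}^∞ (z^n + z̄^n)/(n·n!). -/
noncomputable def EiSum (w : ℂ) : ℂ :=
  2 * (gammaE : ℂ) + 2 * (Real.log ‖w‖ : ℂ) +
    ∑' n : ℕ, (w ^ (n + 1) + ((starRingEnd ℂ) w) ^ (n + 1)) /
      (((n : ℂ) + 1) * (Nat.factorial (n + 1) : ℂ))


/-- X(z,λ) = e^{-iλz - iλ̄z̄}. -/
noncomputable def Xf (z l : ℂ) : ℂ :=
  Complex.exp (-Complex.I * l * z - Complex.I * (starRingEnd ℂ) l * (starRingEnd ℂ) z)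

/-- 𝒢(λ) = (1/4)(e^{-iλ} + e^{iλ̄})(Ei(iλ) + Ei(-iλ̄)), via the continuous extension. -/
noncomputable def Gf (l : ℂ) : ℂ :=
  (1 / 4) * (Complex.exp (-Complex.I * l) + Complex.exp (Complex.I * (starRingEnd ℂ) l)) *
    EiSum (Complex.I * l)

/-- The regularized Green's function g^r(z,λ). -/
noncomputable def grE (z l : ℂ) : ℂ :=
  (1 / (16 * (Real.pi : ℂ))) * Complex.exp (-Complex.I * l * z) * EiSum (Complex.I * l * z) -
    (1 / (16 * (Real.pi : ℂ))) * (1 + Xf z l) * Gf l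

/-- EiSum is real: it is invariant under conjugation. -/
lemma conj_EiSum (w : ℂ) : (starRingEnd ℂ) (EiSum w) = EiSum w := by
  unfold EiSum
  rw [map_add, map_add, map_mul, map_mul]
  have ht : (starRingEnd ℂ) (∑' n : ℕ, (w ^ (n + 1) + ((starRingEnd ℂ) w) ^ (n + 1)) /
      (((n : ℂ) + 1) * (Nat.factorial (n + 1) : ℂ)))
      = ∑' n : ℕ, (w ^ (n + 1) + ((starRingEnd ℂ) w) ^ (n + 1)) /
      (((n : ℂ) + 1) * (Nat.factorial (n + 1) : ℂ)) := by
    rw [show ((starRingEnd ℂ) : ℂ → ℂ) = star from rfl, tsum_star]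
    congr 1; ext n
    simp [map_div₀, map_add, map_mul, map_pow, Complex.conj_conj]
    ring
  rw [ht]
  simp [Complex.conj_ofReal, map_ofNat]

/-- Gf is real. -/
lemma conj_Gf (l : ℂ) : (starRingEnd ℂ) (Gf l) = Gf l := by
  unfold Gf
  rw [map_mul, map_mul, conj_EiSum, map_add, ← Complex.exp_conj, ← Complex.exp_conj]
  simp [map_div₀, Complex.conj_conj, map_ofNat]
  exact Or.inl (by ring)

/-- conj X · X = 1. -/
lemma conj_Xf_mul (z l : ℂ) : (starRingEnd ℂ) (Xf z l) * Xf z l = 1 := by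
  unfold Xf
  rw [← Complex.exp_conj, ← Complex.exp_add, ← Complex.exp_zero]
  congr 1
  simp only [map_sub, map_neg, map_mul, Complex.conj_conj, Complex.conj_I]
  ring

/-- Symmetry of the regularized Green's function: conj(g^r(z,λ)) · X(z,λ) = g^r(z,λ). -/
theorem stmt8 (z l : ℂ) (hz : z ≠ 0) (hl : l ≠ 0) :
    (starRingEnd ℂ) (grE z l) * Xf z l = grE z l := by
  have h1 : (starRingEnd ℂ) (Complex.exp (-Complex.I * l * z)) * Xf z l
      = Complex.exp (-Complex.I * l * z) := by
    rw [← Complex.exp_conj]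
    unfold Xf
    rw [← Complex.exp_add]
    congr 1
    simp only [map_mul, map_neg, Complex.conj_I]
    ring
  have h2 : (starRingEnd ℂ) (EiSum (Complex.I * l * z)) = EiSum (Complex.I * l * z) :=
    conj_EiSum _
  have h3 := conj_Xf_mul z l
  have h4 := conj_Gf l
  have hpi : (starRingEnd ℂ) (1 / (16 * (Real.pi : ℂ))) = 1 / (16 * (Real.pi : ℂ)) := by
    simp [map_div₀, Complex.conj_ofReal, map_ofNat]
  unfold grE
  rw [map_sub]
  rw [sub_mul]
  congr 1
  · rw [map_mul, map_mul, hpi, h2, mul_assoc, mul_assoc,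
      mul_comm (EiSum (Complex.I * l * z)) (Xf z l), ← mul_assoc
      ((starRingEnd ℂ) (Complex.exp (-Complex.I * l * z))), h1]
    ring
  · rw [map_mul, map_mul, hpi, h4, map_add, map_one]
    have : (1 + (starRingEnd ℂ) (Xf z l)) * Xf z l = Xf z l + 1 := by
      rw [add_mul, one_mul, h3]
    calc 1 / (16 * (Real.pi : ℂ)) * (1 + (starRingEnd ℂ) (Xf z l)) * Gf l * Xf z l
        = 1 / (16 * (Real.pi : ℂ)) * ((1 + (starRingEnd ℂ) (Xf z l)) * Xf z l) * Gf l := by ring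
      _ = 1 / (16 * (Real.pi : ℂ)) * (1 + Xf z l) * Gf l := by rw [this]; ring
end

section
/- For λ ≠ 0 with iλz and -iλ̄z̄ off the branch cut, the ∂̄-derivative of g^r with respect to λ̄ equals ∂g^r/∂λ̄ = (1/(16πλ̄)) X(z,λ) + (iz̄/(16π)) X(z,λ) 𝒢(λ) - (1/(16π))(1 + X(z,λ)) ∂𝒢/∂λ̄. -/
set_option maxHeartbeats 1000000


open scoped Real

section aux

noncomputable def hfun (w : ℂ) : ℂ :=
  ∑' n : ℕ, w ^ (n + 1) / (((n : ℂ) + 1) * (Nat.factorial (n + 1) : ℂ))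

noncomputable def Efun (w : ℂ) : ℂ := ∑' n : ℕ, w ^ n / (Nat.factorial (n + 1) : ℂ)

lemma hterm_norm (w : ℂ) (n : ℕ) :
    ‖w ^ (n + 1) / (((n : ℂ) + 1) * (Nat.factorial (n + 1) : ℂ))‖
      = ‖w‖ ^ (n + 1) / (((n + 1) * Nat.factorial (n + 1) : ℕ) : ℝ) := by
  rw [norm_div, norm_pow]
  congr 1
  have : (((n : ℂ) + 1) * (Nat.factorial (n + 1) : ℂ)) = (((n + 1) * Nat.factorial (n + 1) : ℕ) : ℂ) := by
    push_cast; ring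
  rw [this, Complex.norm_natCast]

lemma fact_ineq (n : ℕ) : (Nat.factorial n : ℝ) ≤ (((n + 1) * Nat.factorial (n + 1) : ℕ) : ℝ) := by
  have h1 : Nat.factorial n ≤ (n + 1) * Nat.factorial (n + 1) :=
    le_trans (Nat.factorial_le (Nat.le_succ n)) (Nat.le_mul_of_pos_left _ (Nat.succ_pos n))
  exact_mod_cast h1

lemma hterm_le (w : ℂ) (n : ℕ) :
    ‖w ^ (n + 1) / (((n : ℂ) + 1) * (Nat.factorial (n + 1) : ℂ))‖
      ≤ ‖w‖ * (‖w‖ ^ n / (Nat.factorial n : ℝ)) := by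
  rw [hterm_norm, pow_succ, mul_comm (‖w‖ ^ n) ‖w‖, mul_div_assoc]
  gcongr
  · exact_mod_cast le_trans (Nat.factorial_le (Nat.le_succ n))
      (Nat.le_mul_of_pos_left _ (Nat.succ_pos n))

lemma summable_hterm (w : ℂ) :
    Summable (fun n : ℕ => w ^ (n + 1) / (((n : ℂ) + 1) * (Nat.factorial (n + 1) : ℂ))) :=
  Summable.of_norm <| Summable.of_nonneg_of_le (fun n => norm_nonneg _) (hterm_le w)
    ((Real.summable_pow_div_factorial ‖w‖).mul_left ‖w‖)

lemma Eterm_le (w : ℂ) (n : ℕ) :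
    ‖w ^ n / (Nat.factorial (n + 1) : ℂ)‖ ≤ ‖w‖ ^ n / (Nat.factorial n : ℝ) := by
  rw [norm_div, norm_pow, Complex.norm_natCast]
  gcongr
  · exact Nat.le_succ n

lemma summable_Eterm (w : ℂ) :
    Summable (fun n : ℕ => w ^ n / (Nat.factorial (n + 1) : ℂ)) :=
  Summable.of_norm <| Summable.of_nonneg_of_le (fun n => norm_nonneg _) (Eterm_le w)
    (Real.summable_pow_div_factorial ‖w‖)

lemma summable_expterm (w : ℂ) :
    Summable (fun n : ℕ => w ^ n / (Nat.factorial n : ℂ)) := by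
  refine Summable.of_norm <| Summable.of_nonneg_of_le (fun n => norm_nonneg _)
    (fun n => le_of_eq ?_) (Real.summable_pow_div_factorial ‖w‖)
  rw [norm_div, norm_pow, Complex.norm_natCast]

lemma exp_tsum (w : ℂ) : Complex.exp w = ∑' n : ℕ, w ^ n / (Nat.factorial n : ℂ) := by
  rw [Complex.exp_eq_exp_ℂ, NormedSpace.exp_eq_tsum_div]

lemma Efun_mul (w : ℂ) : w * Efun w = Complex.exp w - 1 := by
  rw [exp_tsum, Summable.tsum_eq_zero_add (summable_expterm w)]
  rw [Efun, ← tsum_mul_left]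
  have h : ∀ n : ℕ, w * (w ^ n / (Nat.factorial (n + 1) : ℂ)) = w ^ (n+1) / (Nat.factorial (n+1) : ℂ) := by
    intro n; rw [pow_succ]; ring
  simp only [h]
  simp [Nat.factorial]

lemma hfun_hasDerivAt (w : ℂ) : HasDerivAt hfun (Efun w) w := by
  have key : HasDerivAt (fun y : ℂ => ∑' n : ℕ,
      y ^ (n + 1) / (((n : ℂ) + 1) * (Nat.factorial (n + 1) : ℂ)))
      (∑' n : ℕ, w ^ n / (Nat.factorial (n + 1) : ℂ)) w := by
    apply hasDerivAt_tsum_of_isPreconnected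
      (u := fun n : ℕ => (‖w‖ + 1) ^ n / (Nat.factorial n : ℝ))
      (Real.summable_pow_div_factorial (‖w‖ + 1))
      (Metric.isOpen_ball (x := (0:ℂ)) (ε := ‖w‖ + 1)) (convex_ball _ _).isPreconnected
      (g' := fun n y => y ^ n / (Nat.factorial (n + 1) : ℂ))
    · intro n y _
      have h1 : HasDerivAt (fun y : ℂ => y ^ (n + 1)) (((n:ℂ) + 1) * y ^ n) y := by
        simpa using hasDerivAt_pow (n + 1) y
      have h2 := h1.div_const (((n : ℂ) + 1) * (Nat.factorial (n + 1) : ℂ))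
      refine h2.congr_deriv ?_
      have hn : ((n : ℂ) + 1) ≠ 0 := Nat.cast_add_one_ne_zero n
      have hf : ((Nat.factorial (n + 1) : ℂ)) ≠ 0 := by
        exact_mod_cast Nat.cast_ne_zero.mpr (Nat.factorial_ne_zero (n + 1))
      rw [mul_div_mul_left _ _ hn]
    · intro n y hy
      have : ‖y‖ ≤ ‖w‖ + 1 := by
        have := mem_ball_zero_iff.mp hy
        linarith [this.le]
      calc ‖y ^ n / (Nat.factorial (n + 1) : ℂ)‖ ≤ ‖y‖ ^ n / (Nat.factorial n : ℝ) := Eterm_le y n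
        _ ≤ (‖w‖ + 1) ^ n / (Nat.factorial n : ℝ) := by
            gcongr <;> first | exact norm_nonneg y | exact this
    · exact mem_ball_zero_iff.mpr (by rw [norm_zero]; positivity)
    · refine summable_of_ne_finset_zero (s := ∅) fun n _ => ?_
      simp [zero_pow (Nat.succ_ne_zero n)]
    · exact mem_ball_zero_iff.mpr (by linarith [norm_nonneg w])
  exact key

lemma EiSum_decomp (w : ℂ) :
    EiSum w = 2 * (gammaE : ℂ) + 2 * (Real.log ‖w‖ : ℂ)
      + (hfun w + hfun ((starRingEnd ℂ) w)) := by
  rw [EiSum, hfun, hfun]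
  simp only [add_div]
  rw [Summable.tsum_add (summable_hterm w) (summable_hterm ((starRingEnd ℂ) w))]

lemma hasDerivAt_conj {L : ℝ → ℂ} {δ : ℂ} {s₀ : ℝ} (h : HasDerivAt L δ s₀) :
    HasDerivAt (fun s => (starRingEnd ℂ) (L s)) ((starRingEnd ℂ) δ) s₀ := by
  simpa [Function.comp_def, Complex.conjCLE_apply] using
    (Complex.conjCLE.toContinuousLinearMap.hasFDerivAt (x := L s₀)).comp_hasDerivAt s₀ h

lemma EiSumPath {L : ℝ → ℂ} {δ l z : ℂ} {s₀ : ℝ} (HL : HasDerivAt L δ s₀) (hLs : L s₀ = l)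
    (hl : l ≠ 0) (hz : z ≠ 0) :
    HasDerivAt (fun s => EiSum (Complex.I * L s * z))
      ((δ * (starRingEnd ℂ) l + (starRingEnd ℂ) δ * l) / (l * (starRingEnd ℂ) l)
        + (Complex.I * δ * z) * Efun (Complex.I * l * z)
        + (starRingEnd ℂ) (Complex.I * δ * z) * Efun ((starRingEnd ℂ) (Complex.I * l * z))) s₀ := by
  have hin : HasDerivAt (fun s => Complex.I * L s * z) (Complex.I * δ * z) s₀ :=
    (HL.const_mul Complex.I).mul_const z
  have hin2 : HasDerivAt (fun s => (starRingEnd ℂ) (Complex.I * L s * z))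
      ((starRingEnd ℂ) (Complex.I * δ * z)) s₀ := hasDerivAt_conj hin
  have hh1 : HasDerivAt (fun s => hfun (Complex.I * L s * z))
      ((Complex.I * δ * z) * Efun (Complex.I * l * z)) s₀ := by
    have := HasDerivAt.scomp_of_eq s₀ (hfun_hasDerivAt (Complex.I * l * z)) hin (by rw [hLs])
    simpa [Function.comp_def, smul_eq_mul, mul_comm] using this
  have hh2 : HasDerivAt (fun s => hfun ((starRingEnd ℂ) (Complex.I * L s * z)))
      ((starRingEnd ℂ) (Complex.I * δ * z) * Efun ((starRingEnd ℂ) (Complex.I * l * z))) s₀ := by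
    have := HasDerivAt.scomp_of_eq s₀ (hfun_hasDerivAt ((starRingEnd ℂ) (Complex.I * l * z))) hin2 (by rw [hLs])
    simpa [Function.comp_def, smul_eq_mul, mul_comm] using this
  have hre : HasDerivAt (fun s => (L s).re) δ.re s₀ := by
    simpa [Function.comp_def] using
      (Complex.reCLM.hasFDerivAt (x := L s₀)).comp_hasDerivAt s₀ HL
  have him : HasDerivAt (fun s => (L s).im) δ.im s₀ := by
    simpa [Function.comp_def] using
      (Complex.imCLM.hasFDerivAt (x := L s₀)).comp_hasDerivAt s₀ HL
  have hn : HasDerivAt (fun s => Complex.normSq (L s))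
      (δ.re * l.re + l.re * δ.re + (δ.im * l.im + l.im * δ.im)) s₀ := by
    have h' := (hre.mul hre).add (him.mul him)
    rw [hLs] at h'
    simpa only [Complex.normSq_apply, Pi.mul_def, Pi.add_def] using h'
  have hns : Complex.normSq l ≠ 0 := by
    simpa [Complex.normSq_eq_zero] using hl
  have hlog : HasDerivAt (fun s => Real.log (Complex.normSq (L s)))
      ((Complex.normSq l)⁻¹ * (δ.re * l.re + l.re * δ.re + (δ.im * l.im + l.im * δ.im))) s₀ := by
    have := (Real.hasDerivAt_log (x := Complex.normSq (L s₀)) (by rw [hLs]; exact hns)).comp s₀ hn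
    rw [hLs] at this
    exact this
  have hlogC : HasDerivAt (fun s => ((Real.log (Complex.normSq (L s)) : ℝ) : ℂ))
      (((Complex.normSq l)⁻¹ * (δ.re * l.re + l.re * δ.re + (δ.im * l.im + l.im * δ.im)) : ℝ) : ℂ) s₀ :=
    hlog.ofReal_comp
  have hev : (fun s => EiSum (Complex.I * L s * z)) =ᶠ[nhds s₀]
      (fun s => (2 * (gammaE : ℂ) + 2 * (Real.log ‖z‖ : ℂ))
        + (((Real.log (Complex.normSq (L s)) : ℝ) : ℂ)
          + (hfun (Complex.I * L s * z) + hfun ((starRingEnd ℂ) (Complex.I * L s * z))))) := by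
    have hne : ∀ᶠ s in nhds s₀, L s ≠ 0 := HL.continuousAt.eventually_ne (by rw [hLs]; exact hl)
    filter_upwards [hne] with s hs
    rw [EiSum_decomp]
    have habs : ‖Complex.I * L s * z‖ = ‖L s‖ * ‖z‖ := by
      simp [map_mul]
    rw [habs, Real.log_mul (by simpa using hs) (by simpa using hz)]
    have h2 : Real.log ‖L s‖ = Real.log (Complex.normSq (L s)) / 2 := by
      rw [Complex.norm_def, Real.log_sqrt (Complex.normSq_nonneg _)]
    rw [h2]
    push_cast
    ring
  have H := ((hlogC.add (hh1.add hh2)).const_add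
      (2 * (gammaE : ℂ) + 2 * (Real.log ‖z‖ : ℂ))).congr_of_eventuallyEq hev
  refine H.congr_deriv ?_
  have hcast : (((Complex.normSq l)⁻¹ * (δ.re * l.re + l.re * δ.re + (δ.im * l.im + l.im * δ.im)) : ℝ) : ℂ)
      = (δ * (starRingEnd ℂ) l + (starRingEnd ℂ) δ * l) / (l * (starRingEnd ℂ) l) := by
    have h1 : δ * (starRingEnd ℂ) l + (starRingEnd ℂ) δ * l
        = ((δ.re * l.re + l.re * δ.re + (δ.im * l.im + l.im * δ.im) : ℝ) : ℂ) := by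
      apply Complex.ext <;>
        simp [Complex.mul_re, Complex.mul_im, Complex.add_re, Complex.add_im] <;> ring
    rw [h1, Complex.mul_conj]
    have hns' : ((Complex.normSq l : ℝ) : ℂ) ≠ 0 := by exact_mod_cast hns
    field_simp
    exact_mod_cast div_mul_cancel₀ _ hns
  rw [hcast]
  ring

lemma grEPath {L : ℝ → ℂ} {δ l z : ℂ} {s₀ : ℝ} (HL : HasDerivAt L δ s₀) (hLs : L s₀ = l)
    (hl : l ≠ 0) (hz : z ≠ 0) {e : ℂ} (he : HasDerivAt (fun s => Gf (L s)) e s₀) :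
    HasDerivAt (fun s => grE z (L s))
      ((1 / (16 * (Real.pi : ℂ))) * (Complex.exp (-Complex.I * l * z) *
          ((-Complex.I * δ * z) * EiSum (Complex.I * l * z)
            + (δ * (starRingEnd ℂ) l + (starRingEnd ℂ) δ * l) / (l * (starRingEnd ℂ) l)
            + (Complex.I * δ * z) * Efun (Complex.I * l * z)
            + (starRingEnd ℂ) (Complex.I * δ * z) * Efun ((starRingEnd ℂ) (Complex.I * l * z))))
        - (1 / (16 * (Real.pi : ℂ))) * ((Xf z l *
            (-Complex.I * δ * z - Complex.I * (starRingEnd ℂ) δ * (starRingEnd ℂ) z)) * Gf l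
          + (1 + Xf z l) * e)) s₀ := by
  have hin : HasDerivAt (fun s => -Complex.I * L s * z) (-Complex.I * δ * z) s₀ :=
    (HL.const_mul (-Complex.I)).mul_const z
  have hexp : HasDerivAt (fun s => Complex.exp (-Complex.I * L s * z))
      (Complex.exp (-Complex.I * l * z) * (-Complex.I * δ * z)) s₀ := by
    have := hin.cexp
    simpa [hLs] using this
  have hES := EiSumPath HL hLs hl hz
  have hin2 : HasDerivAt (fun s => Complex.I * (starRingEnd ℂ) (L s) * (starRingEnd ℂ) z)
      (Complex.I * (starRingEnd ℂ) δ * (starRingEnd ℂ) z) s₀ :=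
    ((hasDerivAt_conj HL).const_mul Complex.I).mul_const ((starRingEnd ℂ) z)
  have hXd : HasDerivAt (fun s => Xf z (L s))
      (Xf z l * (-Complex.I * δ * z - Complex.I * (starRingEnd ℂ) δ * (starRingEnd ℂ) z)) s₀ := by
    have := (hin.sub hin2).cexp
    simpa [Xf, hLs] using this
  have H := ((hexp.const_mul (1 / (16 * (Real.pi : ℂ)))).mul hES).sub
    (((hXd.const_add 1).const_mul (1 / (16 * (Real.pi : ℂ)))).mul he)
  simp only [hLs] at H
  have Hf : (fun s => (1 / (16 * (Real.pi : ℂ))) * Complex.exp (-Complex.I * L s * z) *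
      EiSum (Complex.I * L s * z) - (1 / (16 * (Real.pi : ℂ))) * (1 + Xf z (L s)) * Gf (L s))
      = fun s => grE z (L s) := by
    funext s; rw [grE]
  simp only [Pi.mul_def, Pi.sub_def] at H
  rw [Hf] at H
  refine H.congr_deriv ?_
  ring


end aux

/-- The ∂̄-equation for g^r in λ: if d1, d2 are the partial derivatives of
λ ↦ g^r(z,λ) in λ₁, λ₂ and e1, e2 those of 𝒢, then
(1/2)(d1 + i·d2) = (1/(16πλ̄))X + (iz̄/(16π))X𝒢 - (1/(16π))(1+X)·(1/2)(e1 + i·e2). -/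
theorem stmt11 (z l d1 d2 e1 e2 : ℂ) (hl : l ≠ 0)
    (h1 : offCut (Complex.I * l * z))
    (h2 : offCut (-Complex.I * (starRingEnd ℂ) l * (starRingEnd ℂ) z))
    (h3 : offCut (Complex.I * l))
    (h4 : offCut (-Complex.I * (starRingEnd ℂ) l))
    (hd1 : HasDerivAt (fun s : ℝ => grE z ((s : ℂ) + l.im * Complex.I)) d1 l.re)
    (hd2 : HasDerivAt (fun s : ℝ => grE z ((l.re : ℂ) + (s : ℂ) * Complex.I)) d2 l.im)
    (he1 : HasDerivAt (fun s : ℝ => Gf ((s : ℂ) + l.im * Complex.I)) e1 l.re)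
    (he2 : HasDerivAt (fun s : ℝ => Gf ((l.re : ℂ) + (s : ℂ) * Complex.I)) e2 l.im) :
    (1 / 2) * (d1 + Complex.I * d2) =
      (1 / (16 * (Real.pi : ℂ) * (starRingEnd ℂ) l)) * Xf z l +
        (Complex.I * (starRingEnd ℂ) z / (16 * (Real.pi : ℂ))) * Xf z l * Gf l -
        (1 / (16 * (Real.pi : ℂ))) * (1 + Xf z l) * ((1 / 2) * (e1 + Complex.I * e2)) := by
  have hz : z ≠ 0 := by
    intro h
    exact h1 (by simp [h, offCut])
  have HL1 : HasDerivAt (fun s : ℝ => (s : ℂ) + l.im * Complex.I) 1 l.re := by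
    simpa using (Complex.ofRealCLM.hasDerivAt (x := l.re)).add_const ((l.im : ℂ) * Complex.I)
  have HL2 : HasDerivAt (fun s : ℝ => (l.re : ℂ) + (s : ℂ) * Complex.I) Complex.I l.im := by
    simpa using ((Complex.ofRealCLM.hasDerivAt (x := l.im)).mul_const Complex.I).const_add (l.re : ℂ)
  have hd1' := hd1.unique (grEPath HL1 (Complex.re_add_im l) hl hz he1)
  have hd2' := hd2.unique (grEPath HL2 (Complex.re_add_im l) hl hz he2)
  -- basic nonvanishing facts
  have hπ : (Real.pi : ℂ) ≠ 0 := Complex.ofReal_ne_zero.mpr Real.pi_ne_zero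
  have hlc : (starRingEnd ℂ) l ≠ 0 := by simpa using hl
  have hzc : (starRingEnd ℂ) z ≠ 0 := by simpa using hz
  -- closed form for Efun at the conjugate point
  have hconj : (starRingEnd ℂ) (Complex.I * l * z)
      = -Complex.I * (starRingEnd ℂ) l * (starRingEnd ℂ) z := by
    simp [map_mul, Complex.conj_I]
  have hwne : (starRingEnd ℂ) (Complex.I * l * z) ≠ 0 := by
    rw [hconj]
    simp [Complex.I_ne_zero, hlc, hzc]
  have hE2 := Efun_mul ((starRingEnd ℂ) (Complex.I * l * z))
  have hE2' : Efun ((starRingEnd ℂ) (Complex.I * l * z))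
      = (Complex.exp ((starRingEnd ℂ) (Complex.I * l * z)) - 1) /
          ((starRingEnd ℂ) (Complex.I * l * z)) := by
    rw [eq_div_iff hwne]
    linear_combination hE2
  have hX : Xf z l = Complex.exp (-Complex.I * l * z) *
      Complex.exp (-Complex.I * (starRingEnd ℂ) l * (starRingEnd ℂ) z) := by
    rw [Xf, ← Complex.exp_add]
    ring_nf
  rw [hconj] at hE2'
  rw [hd1', hd2', hX]
  simp only [hconj, map_mul, map_one, Complex.conj_I, mul_one, one_mul]
  rw [hE2']
  set A := Complex.exp (-Complex.I * l * z) with hA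
  set B := Complex.exp (-Complex.I * (starRingEnd ℂ) l * (starRingEnd ℂ) z) with hB
  set S := EiSum (Complex.I * l * z) with hS
  set F := Efun (Complex.I * l * z) with hF
  set G := Gf l with hG
  set m := (starRingEnd ℂ) l with hm
  set y := (starRingEnd ℂ) z with hy
  have hI2 : Complex.I ^ 2 = -1 := Complex.I_sq
  have hI3 : Complex.I ^ 3 = -Complex.I := by rw [pow_succ, hI2]; ring
  have hI4 : Complex.I ^ 4 = 1 := by rw [pow_succ, hI3]; simp [Complex.I_mul_I]
  rw [← sub_eq_zero]
  field_simp [hπ, hl, hlc, hzc, Complex.I_ne_zero]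
  ring_nf
  simp only [hI2, hI3, hI4]
  ring_nf
end

section
/- Suppose for every t ∈ ℝ, b(λ, t) = e^{8i(λ³ + λ̄³)t} b(λ, 0) and also b(λ, t) = e^{i(λc + λ̄c̄)t} b(λ, 0), for all λ in a nonempty open set U ⊆ ℂ \ {0}, where b(·, 0) : U → ℂ is continuous and c ∈ ℂ is fixed. Then b(λ, 0) = 0 for all λ ∈ U. -/
open Complex

lemma exp_lin_eq {a b : ℝ}
    (h : ∀ t : ℝ, Complex.exp (Complex.I * a * t) = Complex.exp (Complex.I * b * t)) :
    a = b := by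
  by_contra hne
  have hd : a - b ≠ 0 := sub_ne_zero.mpr hne
  set t : ℝ := Real.pi / (a - b) with ht
  obtain ⟨n, hn⟩ := (Complex.exp_eq_exp_iff_exists_int).mp (h t)
  have h2 : ((a * t : ℝ) : ℂ) = ((b * t + n * (2 * Real.pi) : ℝ) : ℂ) := by
    apply mul_left_cancel₀ Complex.I_ne_zero
    push_cast
    rw [show Complex.I * (↑a * ↑t) = Complex.I * ↑a * ↑t by ring, hn]
    ring
  have h3 : a * t = b * t + n * (2 * Real.pi) := by exact_mod_cast h2
  have h4 : (a - b) * t = Real.pi := by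
    rw [ht]; field_simp
  have h5 : Real.pi = n * (2 * Real.pi) := by nlinarith [h3, h4]
  have hpi := Real.pi_ne_zero
  have h6 : (1 : ℝ) = 2 * n :=
    mul_left_cancel₀ hpi (by rw [mul_one]; linear_combination h5)
  have : ((1 : ℤ) : ℝ) = ((2 * n : ℤ) : ℝ) := by push_cast; linarith
  have := Int.cast_injective this
  omega

/-- Soliton-vanishing argument: if b obeys both time-evolution laws
b(λ,t) = e^{8i(λ³+λ̄³)t} b(λ,0) and b(λ,t) = e^{i(λc+λ̄c̄)t} b(λ,0) on a nonempty
open set U ⊆ ℂ \ {0}, with b(·,0) continuous on U, then b(·,0) ≡ 0 on U. -/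
theorem stmt13 (U : Set ℂ) (hUopen : IsOpen U) (hUne : U.Nonempty)
    (hU0 : (0 : ℂ) ∉ U) (b : ℂ → ℝ → ℂ) (c : ℂ)
    (hcont : ContinuousOn (fun l => b l 0) U)
    (h1 : ∀ t : ℝ, ∀ l ∈ U,
      b l t = Complex.exp (8 * Complex.I * (l ^ 3 + ((starRingEnd ℂ) l) ^ 3) * t) * b l 0)
    (h2 : ∀ t : ℝ, ∀ l ∈ U,
      b l t = Complex.exp (Complex.I * (l * c + (starRingEnd ℂ) l * (starRingEnd ℂ) c) * t) * b l 0) :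
    ∀ l ∈ U, b l 0 = 0 := by
  intro l hl
  by_contra hb
  set V : Set ℂ := U ∩ (fun z => b z 0) ⁻¹' {0}ᶜ with hVdef
  have hVopen : IsOpen V := hcont.isOpen_inter_preimage hUopen isOpen_compl_singleton
  have hlV : l ∈ V := ⟨hl, hb⟩
  obtain ⟨ε, hε, hball⟩ := Metric.isOpen_iff.mp hVopen l hlV
  have key : ∀ z ∈ V, 8 * (z ^ 3).re = (z * c).re := by
    intro z hz
    obtain ⟨hzU, hzb⟩ := hz
    have hzb' : b z 0 ≠ 0 := hzb
    have heq : ∀ t : ℝ, Complex.exp (Complex.I * ((16 * (z ^ 3).re : ℝ) : ℂ) * t)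
        = Complex.exp (Complex.I * ((2 * (z * c).re : ℝ) : ℂ) * t) := by
      intro t
      have e3 : Complex.exp (8 * Complex.I * (z ^ 3 + ((starRingEnd ℂ) z) ^ 3) * t)
          = Complex.exp (Complex.I * (z * c + (starRingEnd ℂ) z * (starRingEnd ℂ) c) * t) :=
        mul_right_cancel₀ hzb' (((h1 t z hzU).symm).trans (h2 t z hzU))
      have eA : 8 * Complex.I * (z ^ 3 + ((starRingEnd ℂ) z) ^ 3) * t
          = Complex.I * ((16 * (z ^ 3).re : ℝ) : ℂ) * t := by
        rw [show ((starRingEnd ℂ) z) ^ 3 = (starRingEnd ℂ) (z ^ 3) from (map_pow _ z 3).symm,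
          Complex.add_conj]
        all_goals push_cast
        all_goals ring
      have eB : Complex.I * (z * c + (starRingEnd ℂ) z * (starRingEnd ℂ) c) * t
          = Complex.I * ((2 * (z * c).re : ℝ) : ℂ) * t := by
        rw [show (starRingEnd ℂ) z * (starRingEnd ℂ) c = (starRingEnd ℂ) (z * c) from
          (map_mul _ z c).symm, Complex.add_conj]
        all_goals push_cast
        all_goals ring
      rw [eA, eB] at e3
      exact e3
    have := exp_lin_eq heq
    linarith
  set y : ℝ := l.im with hy
  have hroot : ∀ x ∈ Set.Ioo (l.re - ε) (l.re + ε),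
      8 * x ^ 3 + (-24 * y ^ 2 - c.re) * x + y * c.im = 0 := by
    intro x hx
    have hz : ((x : ℂ) + y * Complex.I) ∈ Metric.ball l ε := by
      rw [Metric.mem_ball, Complex.dist_eq]
      have hl' : (x : ℂ) + y * Complex.I - l = ((x - l.re : ℝ) : ℂ) := by
        nth_rewrite 1 [← Complex.re_add_im l]
        push_cast [hy]
        ring
      rw [hl', Complex.norm_real, Real.norm_eq_abs]
      rw [abs_lt]
      constructor <;> [linarith [hx.1]; linarith [hx.2]]
    have hk := key _ (hball hz)
    have hre3 : (((x : ℂ) + y * Complex.I) ^ 3).re = x ^ 3 - 3 * x * y ^ 2 := by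
      simp [pow_succ, Complex.add_re, Complex.add_im, Complex.mul_re, Complex.mul_im]
      try ring
    have hrec : ((((x : ℂ) + y * Complex.I)) * c).re = x * c.re - y * c.im := by
      simp [Complex.mul_re]
      try ring
    rw [hre3, hrec] at hk
    linarith
  set p : Polynomial ℝ := Polynomial.C 8 * Polynomial.X ^ 3
      + Polynomial.C (-24 * y ^ 2 - c.re) * Polynomial.X + Polynomial.C (y * c.im) with hp
  have hp3 : p.coeff 3 = 8 := by
    rw [hp]
    simp only [Polynomial.coeff_add, Polynomial.coeff_C_mul, Polynomial.coeff_X_pow,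
      Polynomial.coeff_X, Polynomial.coeff_C]
    norm_num
  have hpne : p ≠ 0 := by
    intro h0
    rw [h0] at hp3
    simp at hp3
  have hinf : {x | p.IsRoot x}.Infinite := by
    apply Set.Infinite.mono (s := Set.Ioo (l.re - ε) (l.re + ε)) _
      (Set.Ioo_infinite (show l.re - ε < l.re + ε by linarith))
    intro x hx
    have := hroot x hx
    simp only [Set.mem_setOf_eq, Polynomial.IsRoot, hp]
    simp [Polynomial.eval_add, Polynomial.eval_mul]
    linarith
  exact hpne (Polynomial.eq_zero_of_infinite_isRoot p hinf)
end

section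
/- Let Δ : ℂ → ℂ be continuous, real-valued, with Δ(λ) → 1 as |λ| → ∞, and suppose Δ is holomorphic on ℂ \ (E ∪ {0}) where E = {λ : Δ(λ) = 0}. Then E = ∅ and Δ ≡ 1 on ℂ. -/
open Filter Set Metric Complex

lemma aux_neBot : (Filter.comap (fun z : ℂ => ‖z‖) Filter.atTop).NeBot := by
  refine Filter.comap_neBot fun t ht => ?_
  obtain ⟨b, hb⟩ := Filter.mem_atTop_sets.mp ht
  exact ⟨((max b 0 : ℝ) : ℂ), hb _ (by
    beta_reduce; rw [Complex.norm_real, Real.norm_eq_abs, _root_.abs_of_nonneg (le_max_right b 0)]; exact le_max_left b 0)⟩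

lemma aux_pc (r : ℝ) : IsPathConnected {z : ℂ | r < ‖z‖} := by
  have hrank : 1 < Module.rank ℝ ℂ := by rw [Complex.rank_real_complex]; norm_num
  set A : Set ℂ := {z : ℂ | r < ‖z‖} with hA
  have hsub : ∀ z ∈ A, Metric.sphere (0:ℂ) (‖z‖) ⊆ A := by
    intro z hz y hy
    rw [mem_sphere_zero_iff_norm] at hy
    simpa [hA, hy] using hz
  have hj : ∀ z ∈ A, JoinedIn A z ((‖z‖ : ℝ) : ℂ) := by
    intro z hz
    have h1 : z ∈ Metric.sphere (0:ℂ) (‖z‖) := by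
      simp [mem_sphere_zero_iff_norm]
    have h2 : ((‖z‖ : ℝ) : ℂ) ∈ Metric.sphere (0:ℂ) (‖z‖) := by
      simp [mem_sphere_zero_iff_norm, _root_.abs_of_nonneg (norm_nonneg z)]
    exact ((isPathConnected_sphere hrank (0:ℂ) (norm_nonneg z)).joinedIn z h1 _ h2).mono
      (hsub z hz)
  rw [isPathConnected_iff]
  constructor
  · exact ⟨((max r 0 + 1 : ℝ) : ℂ), by
      simp only [hA, mem_setOf_eq, Complex.norm_real, Real.norm_eq_abs]
      rw [_root_.abs_of_nonneg (by positivity)]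
      calc r ≤ max r 0 := le_max_left r 0
        _ < max r 0 + 1 := by linarith⟩
  · intro z hz w hw
    have jm : JoinedIn A ((‖z‖ : ℝ) : ℂ) ((‖w‖ : ℝ) : ℂ) := by
      have hseg : IsPathConnected ((fun x : ℝ => (x : ℂ)) '' segment ℝ (‖z‖) (‖w‖)) :=
        ((convex_segment (‖z‖) (‖w‖)).isPathConnected
          ⟨_, left_mem_segment ℝ _ _⟩).image Complex.continuous_ofReal
      have hsub2 : (fun x : ℝ => (x : ℂ)) '' segment ℝ (‖z‖) (‖w‖) ⊆ A := by
        rintro _ ⟨x, hx, rfl⟩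
        rw [segment_eq_uIcc] at hx
        have hmin : min (‖z‖) (‖w‖) ≤ x := (Set.mem_uIcc.mp hx).elim
          (fun h => le_trans (min_le_left _ _) h.1) (fun h => le_trans (min_le_right _ _) h.1)
        have : r < x := lt_of_lt_of_le (lt_min hz hw) hmin
        simp only [hA, mem_setOf_eq, Complex.norm_real, Real.norm_eq_abs]
        calc r < x := this
          _ ≤ |x| := le_abs_self x
      exact (hseg.joinedIn _ ⟨_, left_mem_segment ℝ _ _, rfl⟩ _ ⟨_, right_mem_segment ℝ _ _, rfl⟩).mono hsub2
    exact (hj z hz).trans (jm.trans (hj w hw).symm)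

lemma aux_const {Δ : ℂ → ℂ} {U : Set ℂ} (hU : IsOpen U) (hc : IsPreconnected U)
    (hd : DifferentiableOn ℂ Δ U) (hreal : ∀ l, (Δ l).im = 0) :
    ∀ z ∈ U, ∀ w ∈ U, Δ z = Δ w := by
  have ha : AnalyticOnNhd ℂ Δ U := hd.analyticOnNhd hU
  rcases ha.is_constant_or_isOpen hc with ⟨c, hcst⟩ | hop
  · intro z hz w hw; rw [hcst z hz, hcst w hw]
  · intro z hz w hw
    exfalso
    have hopen := hop U Subset.rfl hU
    obtain ⟨ε, hε, hball⟩ := Metric.isOpen_iff.mp hopen (Δ z) ⟨z, hz, rfl⟩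
    have hmem : Δ z + (ε/2) * Complex.I ∈ Metric.ball (Δ z) ε := by
      simp only [Metric.mem_ball, Complex.dist_eq, add_sub_cancel_left]
      rw [norm_mul, Complex.norm_I, mul_one, norm_div, Complex.norm_real, Real.norm_eq_abs, Complex.norm_two,
        abs_of_pos hε]
      linarith
    obtain ⟨y, _, hy⟩ := hball hmem
    have him := congrArg Complex.im hy
    simp only [Complex.add_im, hreal, Complex.mul_im, Complex.I_im, Complex.I_re,
      Complex.div_ofNat_im, Complex.ofReal_re, Complex.ofReal_im, Complex.div_ofNat_re,
      mul_one, mul_zero, zero_add, add_zero] at him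
    linarith


lemma aux_eqOne {Δ : ℂ → ℂ} (hreal : ∀ l : ℂ, (Δ l).im = 0)
    (hlim : Filter.Tendsto Δ (Filter.comap (fun z : ℂ => ‖z‖) Filter.atTop) (nhds 1))
    {r : ℝ} (hd : DifferentiableOn ℂ Δ {z : ℂ | r < ‖z‖}) :
    ∀ z : ℂ, r < ‖z‖ → Δ z = 1 := by
  have hopen : IsOpen {z : ℂ | r < ‖z‖} :=
    isOpen_lt continuous_const continuous_norm
  have hconst := aux_const hopen (aux_pc r).isConnected.isPreconnected hd hreal
  obtain ⟨z₀, hz₀, -⟩ := aux_pc r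
  have hev : ∀ᶠ z in Filter.comap (fun z : ℂ => ‖z‖) Filter.atTop, Δ z = Δ z₀ := by
    have hmem : {z : ℂ | r < ‖z‖} ∈ Filter.comap (fun z : ℂ => ‖z‖) Filter.atTop :=
      Filter.preimage_mem_comap (Ioi_mem_atTop r)
    filter_upwards [hmem] with z hz using hconst z hz z₀ hz₀
  have htc : Filter.Tendsto Δ (Filter.comap (fun z : ℂ => ‖z‖) Filter.atTop) (nhds (Δ z₀)) :=
    (Filter.tendsto_congr' hev).mpr tendsto_const_nhds
  have h1 : Δ z₀ = 1 := by
    haveI := aux_neBot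
    exact tendsto_nhds_unique htc hlim
  exact fun z hz => (hconst z hz z₀ hz₀).trans h1

/-- If Δ is continuous, real-valued, tends to 1 at infinity, and is holomorphic
off its zero set E and 0, then E = ∅ and Δ ≡ 1. -/

theorem stmt16 (Δ : ℂ → ℂ) (hcont : Continuous Δ)
    (hreal : ∀ l : ℂ, (Δ l).im = 0)
    (hlim : Filter.Tendsto Δ (Filter.comap (fun z : ℂ => ‖z‖) Filter.atTop) (nhds 1))
    (hhol : DifferentiableOn ℂ Δ ({l : ℂ | Δ l = 0} ∪ {0})ᶜ) :
    (∀ l : ℂ, Δ l ≠ 0) ∧ ∀ l : ℂ, Δ l = 1 := by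
  -- zeros are bounded
  have h1 : ∀ᶠ z in Filter.comap (fun z : ℂ => ‖z‖) Filter.atTop, Δ z ≠ 0 :=
    hlim.eventually_ne one_ne_zero
  obtain ⟨t, ht, hts⟩ := h1
  obtain ⟨b, hb⟩ := Filter.mem_atTop_sets.mp ht
  have hbnd : ∀ z : ℂ, b ≤ ‖z‖ → Δ z ≠ 0 := fun z hz => hts (hb _ hz)
  -- E = ∅
  have hne : ∀ z : ℂ, Δ z ≠ 0 := by
    by_contra h
    push_neg at h
    obtain ⟨z₀, hz₀⟩ := h
    set S : Set ℂ := {z : ℂ | Δ z = 0} with hS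
    have hScl : IsClosed S := isClosed_eq hcont continuous_const
    have hSsub : S ⊆ Metric.closedBall 0 (max b 0) := by
      intro z hz
      rw [Metric.mem_closedBall, Complex.dist_eq, sub_zero]
      by_contra hc
      push_neg at hc
      exact hbnd z (le_trans (le_max_left b 0) hc.le) hz
    have hK : IsCompact S :=
      (isCompact_closedBall (0:ℂ) (max b 0)).of_isClosed_subset hScl hSsub
    obtain ⟨lm, hlmS, hmax⟩ := hK.exists_isMaxOn ⟨z₀, hz₀⟩ continuous_norm.continuousOn
    set m : ℝ := ‖lm‖ with hm
    have hA : {z : ℂ | m < ‖z‖} ⊆ ({l : ℂ | Δ l = 0} ∪ {0})ᶜ := by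
      intro z hz
      simp only [mem_compl_iff, mem_union, mem_setOf_eq, mem_singleton_iff, not_or]
      constructor
      · intro hzero
        exact absurd (show m < ‖z‖ from hz) (not_lt.mpr (hmax hzero))
      · rintro rfl
        simp only [mem_setOf_eq, norm_zero] at hz
        exact absurd hz (not_lt.mpr (norm_nonneg lm))
    have hone : ∀ z : ℂ, m < ‖z‖ → Δ z = 1 :=
      aux_eqOne hreal hlim (hhol.mono hA)
    -- contradiction via continuity at lm
    have hΔlm : Δ lm = 0 := hlmS
    by_cases hlm0 : lm = 0
    · -- m = 0, Δ = 1 off 0, so Δ 0 = 1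
      have htend : Filter.Tendsto Δ (nhdsWithin (0:ℂ) {(0:ℂ)}ᶜ) (nhds (Δ 0)) :=
        (hcont.tendsto 0).mono_left nhdsWithin_le_nhds
      have hev : ∀ᶠ z in nhdsWithin (0:ℂ) {(0:ℂ)}ᶜ, Δ z = 1 := by
        filter_upwards [self_mem_nhdsWithin] with z hz
        exact hone z (by simpa [hm, hlm0] using norm_pos_iff.mpr hz)
      have hΔ0 : Δ 0 = 1 :=
        tendsto_nhds_unique ((Filter.tendsto_congr' hev).mp htend) tendsto_const_nhds
      rw [hlm0, hΔ0] at hΔlm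
      exact one_ne_zero hΔlm
    · have hmpos : 0 < m := norm_pos_iff.mpr hlm0
      have htend : Filter.Tendsto (fun t : ℝ => Δ ((t:ℂ) * lm)) (nhdsWithin 1 (Set.Ioi 1))
          (nhds (Δ lm)) := by
        have hc : Filter.Tendsto (fun t : ℝ => (t:ℂ) * lm) (nhdsWithin 1 (Set.Ioi 1)) (nhds lm) := by
          have h := (Complex.continuous_ofReal.mul (continuous_const (y := lm))).tendsto 1
          simp only [Pi.mul_apply, Complex.ofReal_one, one_mul] at h
          exact h.mono_left nhdsWithin_le_nhds
        exact (hcont.tendsto lm).comp hc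
      have hev : ∀ᶠ t : ℝ in nhdsWithin 1 (Set.Ioi 1), Δ ((t:ℂ) * lm) = 1 := by
        filter_upwards [self_mem_nhdsWithin] with t ht
        apply hone
        rw [norm_mul, Complex.norm_real, Real.norm_eq_abs, abs_of_pos (lt_trans one_pos ht)]
        calc m = 1 * m := (one_mul m).symm
          _ < t * m := by exact mul_lt_mul_of_pos_right ht hmpos
      have : Δ lm = 1 :=
        tendsto_nhds_unique ((Filter.tendsto_congr' hev).mp htend) tendsto_const_nhds
      rw [hΔlm] at this
      exact zero_ne_one this
  -- now Δ = 1 everywhere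
  have hA0 : {z : ℂ | (0:ℝ) < ‖z‖} ⊆ ({l : ℂ | Δ l = 0} ∪ {0})ᶜ := by
    intro z hz
    simp only [mem_compl_iff, mem_union, mem_setOf_eq, mem_singleton_iff, not_or]
    exact ⟨hne z, fun h => by simp [h] at hz⟩
  have hone : ∀ z : ℂ, (0:ℝ) < ‖z‖ → Δ z = 1 :=
    aux_eqOne hreal hlim (hhol.mono hA0)
  refine ⟨hne, fun z => ?_⟩
  by_cases hz : z = 0
  · subst hz
    have htend : Filter.Tendsto Δ (nhdsWithin (0:ℂ) {(0:ℂ)}ᶜ) (nhds (Δ 0)) :=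
      (hcont.tendsto 0).mono_left nhdsWithin_le_nhds
    have hev : ∀ᶠ w in nhdsWithin (0:ℂ) {(0:ℂ)}ᶜ, Δ w = 1 := by
      filter_upwards [self_mem_nhdsWithin] with w hw
      exact hone w (norm_pos_iff.mpr hw)
    exact tendsto_nhds_unique ((Filter.tendsto_congr' hev).mp htend) tendsto_const_nhds
  · exact hone z (norm_pos_iff.mpr hz)
end

section
/- Let v : ℂ → ℂ satisfy |v(z)| ≤ q(1+|z|)^{-4-ε} for some q, ε > 0, and suppose |g^r(w,λ)| ≤ (C/|λ|)(1 + 1/|w|) for all w ≠ 0, λ ≠ 0, and |g^r(w,λ)| ≤ C(|ln|λ|²| + |ln|w|²| + 1) when |λ||w| < 1 with |λ| > 1. Then ∫∫_ℂ ∫∫_ℂ |g^r(z-ξ,λ)|² |v(ξ)|² (1+|ξ|)^{6+ε} (1+|z|)^{-(6+ε)} dz dξ → 0 as |λ| → ∞; i.e. the Hilbert–Schmidt norm of the operator H^r(λ) tends to zero. -/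
open MeasureTheory Filter Set Metric

local notation:max "cabs " z:max => ‖z‖

private lemma log_le_two_sqrt {x : ℝ} (hx : 1 ≤ x) : Real.log x ≤ 2 * Real.sqrt x := by
  have h0 : (0:ℝ) < x := by linarith
  have h1 : Real.log (Real.sqrt x) ≤ Real.sqrt x - 1 :=
    Real.log_le_sub_one_of_pos (Real.sqrt_pos.2 h0)
  rw [Real.log_sqrt h0.le] at h1
  nlinarith [Real.sqrt_nonneg x]

private lemma int1D :
    Integrable ((Set.Ioo (-1:ℝ) 1).indicator (fun x : ℝ => |x| ^ (-(2:ℝ)⁻¹))) := by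
  rw [integrable_indicator_iff measurableSet_Ioo]
  have hIoc : IntegrableOn (fun x : ℝ => |x| ^ (-(2:ℝ)⁻¹)) (Set.Ioc (0:ℝ) 1) := by
    refine ((intervalIntegral.intervalIntegrable_rpow' (a := 0) (b := 1)
      (by norm_num : (-1:ℝ) < -(2:ℝ)⁻¹)).1).congr_fun ?_ measurableSet_Ioc
    exact fun x hx => by rw [abs_of_pos hx.1]
  have hIcc : IntegrableOn (fun x : ℝ => |x| ^ (-(2:ℝ)⁻¹)) (Set.Icc (0:ℝ) 1) :=
    hIoc.congr_set_ae Ioc_ae_eq_Icc.symm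
  have hIco : IntegrableOn (fun x : ℝ => |x| ^ (-(2:ℝ)⁻¹)) (Set.Ico (-1:ℝ) 0) := by
    have h1 : Integrable ((Set.Ioc (0:ℝ) 1).indicator (fun x : ℝ => |x| ^ (-(2:ℝ)⁻¹))) :=
      (integrable_indicator_iff measurableSet_Ioc).2 hIoc
    have h2 := h1.comp_neg
    have h3 : (fun x : ℝ => (Set.Ioc (0:ℝ) 1).indicator (fun y : ℝ => |y| ^ (-(2:ℝ)⁻¹)) (-x))
        = (Set.Ico (-1:ℝ) 0).indicator (fun y : ℝ => |y| ^ (-(2:ℝ)⁻¹)) := by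
      funext x
      by_cases hx : x ∈ Set.Ico (-1:ℝ) 0
      · rw [Set.indicator_of_mem hx,
          Set.indicator_of_mem (show -x ∈ Set.Ioc (0:ℝ) 1 by
            constructor
            · linarith [hx.2]
            · linarith [hx.1]), abs_neg]
      · rw [Set.indicator_of_notMem hx, Set.indicator_of_notMem]
        intro h
        exact hx ⟨by linarith [h.2], by linarith [h.1]⟩
    rw [h3] at h2
    exact (integrable_indicator_iff measurableSet_Ico).1 h2
  refine (hIco.union hIcc).mono_set fun x hx => ?_
  rcases lt_or_ge x 0 with h | h
  · exact Or.inl ⟨hx.1.le, h⟩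
  · exact Or.inr ⟨h, hx.2.le⟩

private lemma re_im_null :
    volume ({w : ℂ | w.re = 0} ∪ {w : ℂ | w.im = 0}) = 0 := by
  have hre : volume {w : ℂ | w.re = 0} = 0 := by
    have h : {w : ℂ | w.re = 0} = (LinearMap.ker Complex.reLm : Submodule ℝ ℂ) := by
      ext w; simp [LinearMap.mem_ker, Complex.reLm]
    rw [h]
    refine Measure.addHaar_submodule _ _ fun htop => ?_
    have h1 : (1 : ℂ) ∈ LinearMap.ker Complex.reLm := htop ▸ Submodule.mem_top
    simp [LinearMap.mem_ker, Complex.reLm] at h1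
  have him : volume {w : ℂ | w.im = 0} = 0 := by
    have h : {w : ℂ | w.im = 0} = (LinearMap.ker Complex.imLm : Submodule ℝ ℂ) := by
      ext w; simp [LinearMap.mem_ker, Complex.imLm]
    rw [h]
    refine Measure.addHaar_submodule _ _ fun htop => ?_
    have h1 : (Complex.I : ℂ) ∈ LinearMap.ker Complex.imLm := htop ▸ Submodule.mem_top
    simp [LinearMap.mem_ker, Complex.imLm] at h1
  exact measure_union_null hre him

private lemma psi_int :
    Integrable ((Metric.ball (0:ℂ) 1).indicator (fun w : ℂ => (cabs w)⁻¹)) := by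
  set F : ℝ → ℝ := (Set.Ioo (-1:ℝ) 1).indicator (fun x : ℝ => |x| ^ (-(2:ℝ)⁻¹)) with hF
  have hFnn : ∀ x, 0 ≤ F x :=
    fun x => Set.indicator_nonneg (fun y _ => Real.rpow_nonneg (abs_nonneg y) _) x
  have hprod : Integrable (fun p : ℝ × ℝ => F p.1 * F p.2) := int1D.mul_prod int1D
  have hcomp : Integrable (fun w : ℂ => F w.re * F w.im) := by
    exact (Complex.volume_preserving_equiv_real_prod.integrable_comp_emb
      Complex.measurableEquivRealProd.measurableEmbedding).2 hprod
  refine hcomp.mono' ((continuous_norm.measurable.inv).indicator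
      measurableSet_ball).aestronglyMeasurable ?_
  rw [ae_iff]
  refine measure_mono_null (fun w hw => ?_) re_im_null
  simp only [Set.mem_setOf_eq, not_le] at hw
  by_contra hmem
  simp only [Set.mem_union, Set.mem_setOf_eq, not_or] at hmem
  obtain ⟨hre, him⟩ := hmem
  refine absurd ?_ (not_le.2 hw)
  have hFnn' : ∀ x : ℝ, x ≠ 0 → -1 < x → x < 1 → F x = |x| ^ (-(2:ℝ)⁻¹) := by
    intro x _ h1 h2
    exact Set.indicator_of_mem (Set.mem_Ioo.mpr ⟨h1, h2⟩) _
  by_cases hball : w ∈ Metric.ball (0:ℂ) 1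
  · have habs : cabs w < 1 := by
      simpa using mem_ball_zero_iff.1 hball
    have habs0 : 0 < cabs w := by
      rcases eq_or_ne w 0 with rfl | hw0
      · simp at hre
      · exact norm_pos_iff.2 hw0
    have hrelt : |w.re| < 1 := lt_of_le_of_lt (Complex.abs_re_le_norm w) habs
    have himlt : |w.im| < 1 := lt_of_le_of_lt (Complex.abs_im_le_norm w) habs
    have hFre : F w.re = |w.re| ^ (-(2:ℝ)⁻¹) :=
      hFnn' _ hre (by cases abs_lt.1 hrelt; linarith) (by cases abs_lt.1 hrelt; linarith)
    have hFim : F w.im = |w.im| ^ (-(2:ℝ)⁻¹) :=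
      hFnn' _ him (by cases abs_lt.1 himlt; linarith) (by cases abs_lt.1 himlt; linarith)
    rw [Set.indicator_of_mem hball, hFre, hFim, ← Real.mul_rpow (abs_nonneg _) (abs_nonneg _)]
    set t : ℝ := |w.re| * |w.im| with ht
    have ht0 : 0 < t := mul_pos (abs_pos.2 hre) (abs_pos.2 him)
    have hts : t ^ (-(2:ℝ)⁻¹) = (Real.sqrt t)⁻¹ := by
      rw [Real.sqrt_eq_rpow, ← Real.rpow_neg ht0.le]
      norm_num
    have hsle : Real.sqrt t ≤ cabs w := by
      have h1 : t ≤ cabs w ^ 2 := by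
        rw [Complex.sq_norm, Complex.normSq_apply]
        nlinarith [abs_nonneg w.re, abs_nonneg w.im, le_abs_self w.re, neg_abs_le w.re,
          le_abs_self w.im, neg_abs_le w.im, sq_abs w.re, sq_abs w.im]
      calc Real.sqrt t ≤ Real.sqrt (cabs w ^ 2) := Real.sqrt_le_sqrt h1
        _ = cabs w := Real.sqrt_sq habs0.le
    rw [norm_inv, Real.norm_eq_abs, abs_of_nonneg habs0.le, hts]
    exact inv_anti₀ (Real.sqrt_pos.2 ht0) hsle
  · rw [Set.indicator_of_notMem hball]
    simpa using mul_nonneg (hFnn w.re) (hFnn w.im)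

set_option maxHeartbeats 1000000 in
/-- Vanishing of the Hilbert–Schmidt norm of H^r(λ) as |λ| → ∞, given the two
pointwise bounds on g^r and the decay of v. -/
theorem stmt19 (g : ℂ → ℂ → ℂ) (v : ℂ → ℂ) (q ε C : ℝ)
    (hq : 0 < q) (hε : 0 < ε) (hC : 0 < C)
    (hgm : ∀ l : ℂ, Measurable (g l)) (hv : Measurable v)
    (hvb : ∀ z : ℂ, ‖v z‖ ≤ q * (1 + ‖z‖) ^ (-(4 + ε)))
    (hb1 : ∀ l : ℂ, l ≠ 0 → ∀ w : ℂ, w ≠ 0 →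
      ‖g l w‖ ≤ C / ‖l‖ * (1 + 1 / ‖w‖))
    (hb2 : ∀ l : ℂ, 1 < ‖l‖ → ∀ w : ℂ, w ≠ 0 →
      ‖l‖ * ‖w‖ < 1 →
      ‖g l w‖ ≤
        C * (|Real.log (‖l‖ ^ 2)| + |Real.log (‖w‖ ^ 2)| + 1)) :
    Filter.Tendsto
      (fun l : ℂ => ∫ z : ℂ, ∫ ξ : ℂ,
        ‖g l (z - ξ)‖ ^ 2 * ‖v ξ‖ ^ 2 *
          (1 + ‖ξ‖) ^ (6 + ε) * (1 + ‖z‖) ^ (-(6 + ε)))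
      (Filter.comap (fun z : ℂ => ‖z‖) Filter.atTop) (nhds 0) := by
  set L := Filter.comap (fun z : ℂ => ‖z‖) Filter.atTop with hLdef
  have habsT : Filter.Tendsto (fun z : ℂ => ‖z‖) L Filter.atTop := Filter.tendsto_comap
  have hev1 : ∀ᶠ l in L, 1 < cabs l := habsT.eventually (Filter.eventually_gt_atTop 1)
  set V : ℂ → ℝ := fun ξ => q^2 * (1 + cabs ξ) ^ (-(2+ε)) with hVdef
  set W : ℂ → ℝ := fun z => (1 + cabs z) ^ (-(6+ε)) with hWdef
  set ψ : ℂ → ℝ := (Metric.ball (0:ℂ) 1).indicator (fun w => (cabs w)⁻¹) with hψdef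
  set D : ℂ × ℂ → ℝ := fun p => 81*C^2 * (ψ (p.1 - p.2) * V p.2 + V p.2 * W p.1) with hDdef
  set f : ℂ → ℂ × ℂ → ℝ := fun l p => cabs (g l (p.1 - p.2)) ^ 2 *
      cabs (v p.2) ^ 2 *
      (1 + cabs p.2) ^ (6 + ε) * (1 + cabs p.1) ^ (-(6 + ε)) with hfdef
  have hψnn : ∀ w, 0 ≤ ψ w :=
    fun w => Set.indicator_nonneg (fun y _ => inv_nonneg.2 (norm_nonneg y)) w
  have hVnn : ∀ ξ, 0 ≤ V ξ := fun ξ => by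
    simp only [hVdef]; positivity
  have hWnn : ∀ z, 0 ≤ W z := fun z => by
    simp only [hWdef]; positivity
  have hW1 : ∀ z, W z ≤ 1 := fun z =>
    Real.rpow_le_one_of_one_le_of_nonpos
      (by linarith [norm_nonneg z]) (by linarith)
  have hfnn : ∀ l p, 0 ≤ f l p := fun l p => by
    simp only [hfdef]
    have h1 : (0:ℝ) < 1 + cabs p.2 := by linarith [norm_nonneg p.2]
    have h2 : (0:ℝ) < 1 + cabs p.1 := by linarith [norm_nonneg p.1]
    positivity
  -- key pointwise bound on g
  have hkey : ∀ l : ℂ, 1 < cabs l → ∀ w : ℂ, w ≠ 0 →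
      cabs (g l w) ^ 2 ≤
        81*C^2 * (if cabs w < 1 then (cabs w)⁻¹ else 1) := by
    intro l hl w hw
    have hl0 : l ≠ 0 := by
      intro h; rw [h] at hl; simp at hl; linarith
    have ha : 0 < cabs w := norm_pos_iff.2 hw
    have hb1' : 0 < cabs l := by linarith
    have hgnn : 0 ≤ cabs (g l w) := norm_nonneg _
    set a := cabs w with hadef
    set b := cabs l with hbdef
    by_cases hsmall : b * a < 1
    · have ha1 : a < 1 := by nlinarith
      rw [if_pos ha1]
      have hinv1 : 1 ≤ a⁻¹ := (one_le_inv₀ ha).2 ha1.le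
      have hlogb : |Real.log (b^2)| = 2 * Real.log b := by
        rw [abs_of_nonneg (Real.log_nonneg (one_le_pow₀ hl.le)), Real.log_pow]
        push_cast; ring
      have hloga : |Real.log (a^2)| = 2 * Real.log a⁻¹ := by
        rw [Real.log_pow, Real.log_inv]
        push_cast
        rw [abs_of_nonpos (by nlinarith [Real.log_nonpos ha.le ha1.le])]
        ring
      have hba : Real.log b ≤ Real.log a⁻¹ := by
        apply Real.log_le_log hb1'
        rw [← one_div, le_div_iff₀ ha]
        linarith
      have hsq : Real.log a⁻¹ ≤ 2 * Real.sqrt a⁻¹ := log_le_two_sqrt hinv1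
      have hsqrt1 : 1 ≤ Real.sqrt a⁻¹ := Real.one_le_sqrt.2 hinv1
      have h1 : cabs (g l w) ≤ C * (9 * Real.sqrt a⁻¹) := by
        calc cabs (g l w)
            ≤ C * (|Real.log (b^2)| + |Real.log (a^2)| + 1) := hb2 l hl w hw hsmall
          _ ≤ C * (9 * Real.sqrt a⁻¹) := by
            rw [hlogb, hloga]
            have hlogbnn : 0 ≤ Real.log b := Real.log_nonneg hl.le
            nlinarith
      have h2 : cabs (g l w)^2 ≤ (C * (9 * Real.sqrt a⁻¹))^2 := by
        apply pow_le_pow_left₀ hgnn h1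
      have h3 : (C * (9 * Real.sqrt a⁻¹))^2 = 81*C^2 * a⁻¹ := by
        have := Real.sq_sqrt (le_of_lt (inv_pos.2 ha))
        nlinarith
      linarith [h3 ▸ h2]
    · push_neg at hsmall
      have hg1 : cabs (g l w) ≤ C / b * (1 + 1/a) := hb1 l hl0 w hw
      by_cases ha1 : a < 1
      · rw [if_pos ha1]
        have h2 : cabs (g l w) ≤ 2*C/(a*b) := by
          have hstep : C / b * (1 + 1/a) ≤ C / b * (2/a) := by
            apply mul_le_mul_of_nonneg_left _ (by positivity)
            have h1a : (1:ℝ) ≤ 1/a := by rw [le_div_iff₀ ha]; linarith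
            have h2a : (2:ℝ)/a = 1/a + 1/a := by ring
            linarith
          calc cabs (g l w) ≤ C / b * (2/a) := le_trans hg1 hstep
            _ = 2*C/(a*b) := by field_simp
        have h3 : cabs (g l w)^2 ≤ (2*C/(a*b))^2 := pow_le_pow_left₀ hgnn h2 2
        have h4 : (2*C/(a*b))^2 ≤ 81*C^2 * a⁻¹ := by
          have hab1 : (1:ℝ) ≤ a*b := by linarith
          have hs2 : (1:ℝ) ≤ (a*b)^2 := one_le_pow₀ hab1
          have hainv1 : (1:ℝ) ≤ a⁻¹ := (one_le_inv₀ ha).2 ha1.le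
          have e1 : (2*C/(a*b))^2 = 4*C^2 / (a*b)^2 := by
            field_simp
            ring
          rw [e1]
          have e2 : 4*C^2 / (a*b)^2 ≤ 4*C^2 := div_le_self (by positivity) hs2
          nlinarith [sq_nonneg C]
        linarith
      · push_neg at ha1
        rw [if_neg (not_lt.2 ha1), mul_one]
        have h2 : cabs (g l w) ≤ 2*C := by
          have hb1le : C / b ≤ C := by
            rw [div_le_iff₀ hb1']; nlinarith
          have : 1 + 1/a ≤ 2 := by
            have : 1/a ≤ 1 := by rw [div_le_one ha]; exact ha1
            linarith
          calc cabs (g l w) ≤ C / b * (1 + 1/a) := hg1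
            _ ≤ C * 2 := by
              apply mul_le_mul hb1le this (by positivity) hC.le
            _ = 2*C := by ring
        nlinarith
  -- v-bound
  have hvV : ∀ ξ : ℂ, cabs (v ξ)^2 * (1 + cabs ξ)^(6+ε) ≤ V ξ := by
    intro ξ
    have ht : (0:ℝ) < 1 + cabs ξ := by linarith [norm_nonneg ξ]
    have h1 : cabs (v ξ)^2 ≤ (q * (1 + cabs ξ)^(-(4+ε)))^2 :=
      pow_le_pow_left₀ (norm_nonneg _) (hvb ξ) 2
    have h2 : (q * (1 + cabs ξ)^(-(4+ε)))^2 * (1 + cabs ξ)^(6+ε)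
        = q^2 * (1 + cabs ξ)^(-(2+ε)) := by
      rw [mul_pow, mul_assoc, ← Real.rpow_natCast ((1 + cabs ξ) ^ (-(4+ε))) 2,
        ← Real.rpow_mul ht.le, ← Real.rpow_add ht]
      congr 1
      push_cast
      ring
    calc cabs (v ξ)^2 * (1 + cabs ξ)^(6+ε)
        ≤ (q * (1 + cabs ξ)^(-(4+ε)))^2 * (1 + cabs ξ)^(6+ε) := by
          apply mul_le_mul_of_nonneg_right h1 (by positivity)
      _ = V ξ := h2
  -- pointwise domination
  have hfD : ∀ l : ℂ, 1 < cabs l → ∀ p : ℂ × ℂ, p.1 - p.2 ≠ 0 → f l p ≤ D p := by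
    intro l hl p hw
    have h1 := hkey l hl _ hw
    have h2 := hvV p.2
    have hWp := hW1 p.1
    have hWnnp := hWnn p.1
    have hVnnp := hVnn p.2
    have hstep : f l p ≤
        81*C^2 * (if cabs (p.1 - p.2) < 1 then (cabs (p.1 - p.2))⁻¹ else 1)
          * V p.2 * W p.1 := by
      simp only [hfdef]
      have hPnn : (0:ℝ) ≤ (1 + cabs p.2)^(6+ε) := by positivity
      calc cabs (g l (p.1 - p.2)) ^ 2 * cabs (v p.2) ^ 2 *
            (1 + cabs p.2) ^ (6 + ε) * (1 + cabs p.1) ^ (-(6 + ε))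
          = cabs (g l (p.1 - p.2)) ^ 2 *
            (cabs (v p.2) ^ 2 * (1 + cabs p.2) ^ (6 + ε)) * W p.1 := by
            simp only [hWdef]; ring
        _ ≤ (81*C^2 * (if cabs (p.1 - p.2) < 1 then (cabs (p.1 - p.2))⁻¹ else 1))
            * V p.2 * W p.1 := by
            apply mul_le_mul_of_nonneg_right _ hWnnp
            apply mul_le_mul h1 h2 (by positivity) _
            have : (0:ℝ) ≤ (if cabs (p.1 - p.2) < 1 then (cabs (p.1 - p.2))⁻¹ else 1) := by
              split
              · exact inv_nonneg.2 (norm_nonneg _)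
              · norm_num
            positivity
        _ = 81*C^2 * (if cabs (p.1 - p.2) < 1 then (cabs (p.1 - p.2))⁻¹ else 1)
            * V p.2 * W p.1 := by ring
    refine le_trans hstep ?_
    simp only [hDdef]
    by_cases hball : cabs (p.1 - p.2) < 1
    · rw [if_pos hball]
      have hψeq : ψ (p.1 - p.2) = (cabs (p.1 - p.2))⁻¹ := by
        rw [hψdef]
        exact Set.indicator_of_mem (by
          rw [mem_ball_zero_iff]; exact hball) _
      rw [← hψeq]
      have hκnn : 0 ≤ ψ (p.1 - p.2) * V p.2 := mul_nonneg (hψnn _) hVnnp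
      have h3 : ψ (p.1 - p.2) * V p.2 * W p.1 ≤ ψ (p.1 - p.2) * V p.2 := by
        nlinarith
      have h4 : 0 ≤ V p.2 * W p.1 := mul_nonneg hVnnp hWnnp
      have hc : (0:ℝ) ≤ 81*C^2 := by positivity
      calc 81*C^2 * ψ (p.1 - p.2) * V p.2 * W p.1
          = 81*C^2 * (ψ (p.1 - p.2) * V p.2 * W p.1) := by ring
        _ ≤ 81*C^2 * (ψ (p.1 - p.2) * V p.2 + V p.2 * W p.1) := by nlinarith
    · rw [if_neg hball]
      have hψeq : ψ (p.1 - p.2) = 0 := by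
        rw [hψdef]
        exact Set.indicator_of_notMem (by
          rw [mem_ball_zero_iff]; exact hball) _
      rw [hψeq]
      ring_nf
      nlinarith [hVnn p.2, hWnn p.1, sq_nonneg C]
  -- measurability
  have hfm : ∀ l, Measurable (f l) := by
    intro l
    simp only [hfdef]
    have hm1 : Measurable fun p : ℂ × ℂ => cabs (g l (p.1 - p.2)) ^ 2 :=
      (continuous_norm.measurable.comp
        ((hgm l).comp (measurable_fst.sub measurable_snd))).pow_const 2
    have hm2 : Measurable fun p : ℂ × ℂ => cabs (v p.2) ^ 2 :=
      (continuous_norm.measurable.comp (hv.comp measurable_snd)).pow_const 2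
    have hc3 : Continuous fun z : ℂ => (1 + cabs z) ^ (6 + ε) :=
      (continuous_const.add continuous_norm).rpow_const
        (fun z => Or.inl (ne_of_gt (show (0:ℝ) < 1 + ‖z‖ by positivity)))
    have hc4 : Continuous fun z : ℂ => (1 + cabs z) ^ (-(6 + ε)) :=
      (continuous_const.add continuous_norm).rpow_const
        (fun z => Or.inl (ne_of_gt (show (0:ℝ) < 1 + ‖z‖ by positivity)))
    exact ((hm1.mul hm2).mul (hc3.measurable.comp measurable_snd)).mul
      (hc4.measurable.comp measurable_fst)
  -- integrability of the dominating function
  have hVint : Integrable V := by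
    have hr : ((Module.finrank ℝ ℂ : ℕ) : ℝ) < 2 + ε := by
      rw [Complex.finrank_real_complex]; norm_num; linarith
    have h := (integrable_one_add_norm (E := ℂ) (μ := volume) hr).const_mul (q^2)
    simpa [hVdef] using h
  have hWint : Integrable W := by
    have hr : ((Module.finrank ℝ ℂ : ℕ) : ℝ) < 6 + ε := by
      rw [Complex.finrank_real_complex]; norm_num; linarith
    have h := integrable_one_add_norm (E := ℂ) (μ := volume) hr
    simpa [hWdef] using h
  have hψint : Integrable ψ := psi_int
  have hψVint : Integrable (fun p : ℂ × ℂ => ψ (p.1 - p.2) * V p.2) (volume.prod volume) := by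
    have hG : Integrable (fun p : ℂ × ℂ => ψ p.1 * V p.2) (volume.prod volume) :=
      hψint.mul_prod hVint
    have := ((measurePreserving_sub_prod (volume : Measure ℂ) volume).integrable_comp
      hG.1).2 hG
    exact this
  have hVWint : Integrable (fun p : ℂ × ℂ => V p.2 * W p.1) (volume.prod volume) := by
    have h := hWint.mul_prod hVint
    have he : (fun p : ℂ × ℂ => V p.2 * W p.1) = fun p : ℂ × ℂ => W p.1 * V p.2 :=
      funext fun p => mul_comm _ _
    rw [he]; exact h
  have hDint : Integrable D (volume.prod volume) := by
    simp only [hDdef]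
    exact (hψVint.add hVWint).const_mul (81*C^2)
  -- the diagonal is null
  have hdiag : (volume.prod volume) {p : ℂ × ℂ | p.1 - p.2 = 0} = 0 := by
    have hmp := measurePreserving_sub_prod (volume : Measure ℂ) volume
    have hs : MeasurableSet (({0} : Set ℂ) ×ˢ (Set.univ : Set ℂ)) :=
      (measurableSet_singleton 0).prod MeasurableSet.univ
    have hset : (fun z : ℂ × ℂ => (z.1 - z.2, z.2)) ⁻¹' (({0} : Set ℂ) ×ˢ Set.univ)
        = {p : ℂ × ℂ | p.1 - p.2 = 0} := by
      ext p; simp [eq_comm]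
    have hval := hmp.measure_preimage hs.nullMeasurableSet
    rw [hset] at hval
    rw [hval, Measure.prod_prod]
    simp
  -- a.e. bound
  have hbnd : ∀ l : ℂ, 1 < cabs l →
      ∀ᵐ p ∂(volume.prod volume), ‖f l p‖ ≤ D p := by
    intro l hl
    rw [ae_iff]
    refine measure_mono_null (fun p hp => ?_) hdiag
    simp only [Set.mem_setOf_eq, not_le] at hp
    by_contra hw
    refine absurd ?_ (not_le.2 hp)
    rw [Real.norm_eq_abs, abs_of_nonneg (hfnn l p)]
    exact hfD l hl p hw
  -- pointwise limit
  have hlim : ∀ᵐ p ∂(volume.prod volume),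
      Filter.Tendsto (fun l => f l p) L (nhds 0) := by
    rw [ae_iff]
    refine measure_mono_null (fun p hp => ?_) hdiag
    simp only [Set.mem_setOf_eq] at hp ⊢
    by_contra hw
    apply hp
    set M : ℝ := (C * (1 + 1/cabs (p.1 - p.2)))^2 *
      (cabs (v p.2)^2 * ((1 + cabs p.2)^(6+ε) *
        (1 + cabs p.1)^(-(6+ε)))) with hMdef
    have hMten : Filter.Tendsto (fun l : ℂ => M * ((cabs l)⁻¹)^2) L (nhds 0) := by
      have h1 : Filter.Tendsto (fun l : ℂ => (cabs l)⁻¹) L (nhds 0) :=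
        tendsto_inv_atTop_zero.comp habsT
      have h2 := (h1.pow 2).const_mul M
      simpa using h2
    refine squeeze_zero' (Filter.Eventually.of_forall (hfnn · p)) ?_ hMten
    refine hev1.mono fun l hl => ?_
    have hl0 : l ≠ 0 := by
      intro h; rw [h] at hl; simp at hl; linarith
    have hbpos : 0 < cabs l := by linarith
    have hgle : cabs (g l (p.1 - p.2)) ≤ C / cabs l *
        (1 + 1/cabs (p.1 - p.2)) := hb1 l hl0 _ hw
    have hgsq : cabs (g l (p.1 - p.2))^2 ≤
        (C * (1 + 1/cabs (p.1 - p.2)))^2 * ((cabs l)⁻¹)^2 := by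
      have := pow_le_pow_left₀ (norm_nonneg _) hgle 2
      calc cabs (g l (p.1 - p.2))^2
          ≤ (C / cabs l * (1 + 1/cabs (p.1 - p.2)))^2 := this
        _ = (C * (1 + 1/cabs (p.1 - p.2)))^2 * ((cabs l)⁻¹)^2 := by
            field_simp
    simp only [hfdef]
    have hrest : (0:ℝ) ≤ cabs (v p.2)^2 * ((1 + cabs p.2)^(6+ε) *
        (1 + cabs p.1)^(-(6+ε))) := by
      have h1 : (0:ℝ) < 1 + cabs p.2 := by linarith [norm_nonneg p.2]
      have h2 : (0:ℝ) < 1 + cabs p.1 := by linarith [norm_nonneg p.1]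
      positivity
    calc cabs (g l (p.1 - p.2)) ^ 2 * cabs (v p.2) ^ 2 *
          (1 + cabs p.2) ^ (6 + ε) * (1 + cabs p.1) ^ (-(6 + ε))
        = cabs (g l (p.1 - p.2)) ^ 2 *
          (cabs (v p.2)^2 * ((1 + cabs p.2)^(6+ε) *
            (1 + cabs p.1)^(-(6+ε)))) := by ring
      _ ≤ ((C * (1 + 1/cabs (p.1 - p.2)))^2 * ((cabs l)⁻¹)^2) *
          (cabs (v p.2)^2 * ((1 + cabs p.2)^(6+ε) *
            (1 + cabs p.1)^(-(6+ε)))) := by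
          exact mul_le_mul_of_nonneg_right hgsq hrest
      _ = M * ((cabs l)⁻¹)^2 := by rw [hMdef]; ring
  -- dominated convergence on the product space
  have hDCT := tendsto_integral_filter_of_dominated_convergence (μ := volume.prod volume)
    (F := f) (f := fun _ : ℂ × ℂ => (0:ℝ)) (l := L) D
    (Filter.Eventually.of_forall fun l => (hfm l).aestronglyMeasurable)
    (hev1.mono hbnd) hDint hlim
  rw [integral_zero] at hDCT
  -- identify the iterated integral with the product integral
  have hev : ∀ᶠ l in L, (∫ p, f l p ∂(volume.prod volume)) =
      ∫ z : ℂ, ∫ ξ : ℂ, cabs (g l (z - ξ)) ^ 2 * cabs (v ξ) ^ 2 *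
        (1 + cabs ξ) ^ (6 + ε) * (1 + cabs z) ^ (-(6 + ε)) := by
    refine hev1.mono fun l hl => ?_
    have hint : Integrable (f l) (volume.prod volume) :=
      hDint.mono' (hfm l).aestronglyMeasurable (hbnd l hl)
    have := MeasureTheory.integral_integral (μ := volume) (ν := volume)
      (f := fun z ξ => cabs (g l (z - ξ)) ^ 2 * cabs (v ξ) ^ 2 *
        (1 + cabs ξ) ^ (6 + ε) * (1 + cabs z) ^ (-(6 + ε))) hint
    rw [← this]
  exact hDCT.congr' hev
end
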